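/- Let (S, f) be a Frobenius GNS in ℕ_0^d. Then S is almost symmetric if and only if L(S) ⊆ PF(S), where L(S) = {h ∈ H(S) : there exists h' ∈ H(S) with h + h' = f}. -/

import Mathlib

open scoped BigOperators

/-- A generalized numerical semigroup: a submonoid of `ℕ^d` with finite complement. -/
def IsGNS {d : ℕ} (S : Set (Fin d → ℕ)) : Prop :=
  (0 : Fin d → ℕ) ∈ S ∧ (∀ x y : Fin d → ℕ, x ∈ S → y ∈ S → x + y ∈ S) ∧ Sᶜ.Finite

/-- The genus: number of gaps. -/
noncomputable def genus {d : ℕ} (S : Set (Fin d → ℕ)) : ℕ := Sᶜ.ncard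

/-- Pseudo-Frobenius elements. -/
def PF {d : ℕ} (S : Set (Fin d → ℕ)) : Set (Fin d → ℕ) :=
  {h | h ∉ S ∧ ∀ s ∈ S, s ≠ 0 → h + s ∈ S}

/-- The type: number of pseudo-Frobenius elements. -/
noncomputable def typ {d : ℕ} (S : Set (Fin d → ℕ)) : ℕ := (PF S).ncard

/-- Maximal elements of a set with respect to a relation. -/
def Maximals {α : Type*} (le : α → α → Prop) (X : Set α) : Set α :=
  {x ∈ X | ∀ y ∈ X, le x y → x = y}

/-- `f` is the unique maximal element of the set of gaps w.r.t. the componentwise order. -/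
def IsFrobenius {d : ℕ} (S : Set (Fin d → ℕ)) (f : Fin d → ℕ) : Prop :=
  Maximals (· ≤ ·) Sᶜ = {f}

/-- Almost symmetric: `2 g(S) + 1 - t(S) = ∏ (h i + 1)` for some gap `h`. -/
def AlmostSymmetric {d : ℕ} (S : Set (Fin d → ℕ)) : Prop :=
  ∃ h ∉ S, 2 * genus S + 1 = typ S + ∏ i, (h i + 1)

/-- Special gaps. -/
def SG {d : ℕ} (S : Set (Fin d → ℕ)) : Set (Fin d → ℕ) :=
  {h ∈ PF S | h + h ∈ S}

/-- The partial order `≤_S` : `y ≤_S x` iff `x - y ∈ S`. -/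
def leS {d : ℕ} (S : Set (Fin d → ℕ)) (x y : Fin d → ℕ) : Prop :=
  ∃ s ∈ S, x + s = y

/-- The Apéry set of `S` with respect to `n`. -/
def Ap {d : ℕ} (S : Set (Fin d → ℕ)) (n : Fin d → ℕ) : Set (Fin d → ℕ) :=
  {s ∈ S | ¬ ∃ u ∈ S, u + n = s}

/-- The reduced Apéry set of `S` with respect to `n`. -/
def Cred {d : ℕ} (S : Set (Fin d → ℕ)) (n : Fin d → ℕ) : Set (Fin d → ℕ) :=
  {s ∈ Ap S n | ∃ h, h ∉ S ∧ s ≤ h + n}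

/-- A monomial order on `ℕ^d` given by its strict-order relation. -/
def IsMonomialOrder (d : ℕ) (lt : (Fin d → ℕ) → (Fin d → ℕ) → Prop) : Prop :=
  (∀ a, ¬ lt a a) ∧ (∀ a b c, lt a b → lt b c → lt a c) ∧
  (∀ a b, a ≠ b → lt a b ∨ lt b a) ∧
  (∀ u a b, lt a b → lt (a + u) (b + u)) ∧
  (∀ a, a ≠ (0 : Fin d → ℕ) → lt 0 a)

/-- Minimal generator of a GNS. -/
def IsMinGen {d : ℕ} (S : Set (Fin d → ℕ)) (x : Fin d → ℕ) : Prop :=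
  x ∈ S ∧ x ≠ 0 ∧ ∀ y ∈ S, ∀ z ∈ S, y ≠ 0 → z ≠ 0 → y + z ≠ x

/-- Irreducible GNS: not an intersection of two GNSs properly containing it. -/
def GNSIrreducible {d : ℕ} (S : Set (Fin d → ℕ)) : Prop :=
  ¬ ∃ S₁ S₂ : Set (Fin d → ℕ), IsGNS S₁ ∧ IsGNS S₂ ∧ S ⊂ S₁ ∧ S ⊂ S₂ ∧ S = S₁ ∩ S₂

/-- Pseudo-symmetric: `PF S = {f, f/2}`. -/
def PseudoSymmetric {d : ℕ} (S : Set (Fin d → ℕ)) : Prop :=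
  ∃ f q : Fin d → ℕ, f ≠ q ∧ q + q = f ∧ PF S = {f, q}

/-- A Frobenius GNS `(S, f)` is almost symmetric iff `L(S) ⊆ PF(S)`. -/
theorem statement4 (d : ℕ) (hd : 0 < d) (S : Set (Fin d → ℕ)) (hS : IsGNS S)
    (f : Fin d → ℕ) (hf : IsFrobenius S f) :
    AlmostSymmetric S ↔
      {h : Fin d → ℕ | h ∉ S ∧ ∃ h', h' ∉ S ∧ h + h' = f} ⊆ PF S := by
  classical
  obtain ⟨h0, hadd, hfin⟩ := hS
  have hfS : f ∉ S := by
    have hmem : f ∈ Maximals (· ≤ ·) Sᶜ := by rw [hf]; rfl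
    exact hmem.1
  -- every gap is ≤ f
  have hle : ∀ a : Fin d → ℕ, a ∉ S → a ≤ f := by
    intro a ha
    have hTfin : ({b | b ∉ S ∧ a ≤ b} : Set (Fin d → ℕ)).Finite :=
      hfin.subset (fun x hx => hx.1)
    have hTne : ({b | b ∉ S ∧ a ≤ b} : Set (Fin d → ℕ)).Nonempty := ⟨a, ha, le_refl a⟩
    obtain ⟨m, hmT, hmax⟩ :=
      Set.Finite.exists_maximalFor (fun x => ∑ i, x i) _ hTfin hTne
    have hmMax : m ∈ Maximals (· ≤ ·) Sᶜ := by
      refine ⟨hmT.1, ?_⟩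
      intro y hy hmy
      have hyT : y ∈ {b | b ∉ S ∧ a ≤ b} := ⟨hy, le_trans hmT.2 hmy⟩
      have hsum : ∑ i, m i ≤ ∑ i, y i := Finset.sum_le_sum (fun i _ => hmy i)
      have heq := le_antisymm hsum (hmax hyT hsum)
      funext i
      exact (Finset.sum_eq_sum_iff_of_le (fun i _ => hmy i)).1 heq i (Finset.mem_univ i)
    have hmf : m ∈ ({f} : Set (Fin d → ℕ)) := hf ▸ hmMax
    exact hmf ▸ hmT.2
  -- abbreviations
  set L : Set (Fin d → ℕ) := {h | h ∉ S ∧ ∃ h', h' ∉ S ∧ h + h' = f} with hL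
  have hLsub : L ⊆ Sᶜ := fun x hx => hx.1
  have hLfin : L.Finite := hfin.subset hLsub
  have hPFsub : PF S ⊆ Sᶜ := fun x hx => hx.1
  have hPFfin : (PF S).Finite := hfin.subset hPFsub
  -- the box
  set B : Set (Fin d → ℕ) := {x | x ≤ f} with hB
  have hBco : B = ↑(Finset.Icc (0 : Fin d → ℕ) f) := by
    ext x
    simp only [hB, Set.mem_setOf_eq, Finset.coe_Icc, Set.mem_Icc]
    exact ⟨fun h => ⟨fun i => Nat.zero_le _, h⟩, fun h => h.2⟩
  have hBfin : B.Finite := by rw [hBco]; exact (Finset.Icc 0 f).finite_toSet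
  have hBcard : B.ncard = ∏ i, (f i + 1) := by
    rw [hBco, Set.ncard_coe_finset, Pi.card_Icc]
    refine Finset.prod_congr rfl (fun i _ => ?_)
    rw [Nat.card_Icc]
    simp
  set A : Set (Fin d → ℕ) := {x | x ≤ f ∧ x ∈ S} with hA
  have hAsub : A ⊆ B := fun x hx => hx.1
  have hAfin : A.Finite := hBfin.subset hAsub
  have hHB : Sᶜ ⊆ B := fun x hx => hle x hx
  have hsplit : B = A ∪ Sᶜ := by
    ext x
    constructor
    · intro hx
      by_cases hxS : x ∈ S
      · exact Or.inl ⟨hx, hxS⟩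
      · exact Or.inr hxS
    · rintro (hx | hx)
      · exact hx.1
      · exact hHB hx
  have hdisj : Disjoint A Sᶜ := by
    rw [Set.disjoint_left]; intro x hx hx'; exact hx' hx.2
  have hBAH : B.ncard = A.ncard + Sᶜ.ncard := by
    rw [hsplit]; exact Set.ncard_union_eq hdisj hAfin hfin
  -- the involution : (f - ·) '' A = Sᶜ \ L
  have himg : (fun x => f - x) '' A = Sᶜ \ L := by
    ext y
    constructor
    · rintro ⟨x, ⟨hxf, hxS⟩, rfl⟩
      have hxadd : x + (f - x) = f := by
        funext i
        have h1 : x i ≤ f i := hxf i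
        simp only [Pi.add_apply, Pi.sub_apply]
        omega
      have hyS : f - x ∉ S := by
        intro hc
        exact hfS (hxadd ▸ hadd x (f - x) hxS hc)
      refine ⟨hyS, ?_⟩
      rintro ⟨-, h', hh'S, hh'⟩
      apply hh'S
      have : h' = x := by
        funext i
        have h1 := congrFun hh' i
        have h2 := congrFun hxadd i
        simp only [Pi.add_apply] at h1 h2
        omega
      exact this ▸ hxS
    · rintro ⟨hyS, hyL⟩
      have hyf : y ≤ f := hle y hyS
      have hyadd : y + (f - y) = f := by
        funext i
        have h1 : y i ≤ f i := hyf i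
        simp only [Pi.add_apply, Pi.sub_apply]
        omega
      have hfyS : f - y ∈ S := by
        by_contra hc
        exact hyL ⟨hyS, f - y, hc, hyadd⟩
      refine ⟨f - y, ⟨fun i => Nat.sub_le _ _, hfyS⟩, ?_⟩
      funext i
      have h1 : y i ≤ f i := hyf i
      simp only [Pi.sub_apply]
      omega
  have hinj : Set.InjOn (fun x => f - x) A := by
    intro x hx y hy hxy
    funext i
    have h1 := congrFun hxy i
    have h2 : x i ≤ f i := hx.1 i
    have h3 : y i ≤ f i := hy.1 i
    simp only [Pi.sub_apply] at h1
    omega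
  have hAcard : A.ncard = (Sᶜ \ L).ncard := by
    rw [← himg, Set.ncard_image_of_injOn hinj]
  have hHsplit : Sᶜ.ncard = L.ncard + (Sᶜ \ L).ncard := by
    have hu : (L ∪ (Sᶜ \ L)).ncard = L.ncard + (Sᶜ \ L).ncard :=
      Set.ncard_union_eq Set.disjoint_sdiff_right hLfin hfin.diff
    rw [Set.union_diff_cancel hLsub] at hu
    exact hu
  -- key : B.ncard + L.ncard = 2 * genus S
  have hkey : B.ncard + L.ncard = 2 * Sᶜ.ncard := by omega
  -- f ∈ PF S
  have hfPF : f ∈ PF S := by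
    refine ⟨hfS, ?_⟩
    intro s hs hs0
    by_contra hc
    have hle' := hle (f + s) hc
    apply hs0
    funext i
    have h1 : (f + s) i ≤ f i := hle' i
    simp only [Pi.add_apply] at h1
    simp only [Pi.zero_apply]
    omega
  -- f ∉ L
  have hfnL : f ∉ L := by
    rintro ⟨-, h', hh'S, hh'⟩
    apply hh'S
    have : h' = 0 := by
      funext i
      have h1 := congrFun hh' i
      simp only [Pi.add_apply] at h1
      simp only [Pi.zero_apply]
      omega
    exact this ▸ h0
  -- PF S \ {f} ⊆ L
  have hPFL : PF S \ {f} ⊆ L := by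
    rintro h ⟨⟨hhS, hhPF⟩, hhf⟩
    have hhle : h ≤ f := hle h hhS
    have hadd' : h + (f - h) = f := by
      funext i
      have h1 : h i ≤ f i := hhle i
      simp only [Pi.add_apply, Pi.sub_apply]
      omega
    refine ⟨hhS, f - h, ?_, hadd'⟩
    intro hc
    have hne : f - h ≠ 0 := by
      intro h0'
      apply hhf
      show h = f
      funext i
      have h1 := congrFun h0' i
      have h2 : h i ≤ f i := hhle i
      simp only [Pi.sub_apply, Pi.zero_apply] at h1
      omega
    exact hfS (hadd' ▸ hhPF (f - h) hc hne)
  have htcard : (PF S).ncard = (PF S \ {f}).ncard + 1 := by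
    rw [Set.ncard_diff_singleton_add_one hfPF hPFfin]
  constructor
  · -- AS → L ⊆ PF
    rintro ⟨h, hhS, heq⟩
    have hhf : h ≤ f := hle h hhS
    have hprod : ∏ i, (h i + 1) ≤ ∏ i, (f i + 1) :=
      Finset.prod_le_prod (fun i _ => Nat.zero_le _)
        (fun i _ => by have h1 : h i ≤ f i := hhf i; omega)
    have ht1 : (PF S \ {f}).ncard ≤ L.ncard :=
      Set.ncard_le_ncard hPFL hLfin
    have heq' : 2 * Sᶜ.ncard + 1 = (PF S).ncard + ∏ i, (h i + 1) := heq
    have hcardeq : L.ncard ≤ (PF S \ {f}).ncard := by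
      rw [← hBcard] at hprod
      omega
    have hLeq : PF S \ {f} = L := Set.eq_of_subset_of_ncard_le hPFL hcardeq hLfin
    rw [← hLeq]
    exact fun x hx => hx.1
  · -- L ⊆ PF → AS
    intro hsub
    have hLPF : L ⊆ PF S \ {f} := fun x hx =>
      ⟨hsub hx, fun hc => hfnL (hc ▸ hx)⟩
    have hLeq : L = PF S \ {f} :=
      Set.Subset.antisymm hLPF hPFL
    refine ⟨f, hfS, ?_⟩
    show 2 * Sᶜ.ncard + 1 = (PF S).ncard + ∏ i, (f i + 1)
    rw [← hBcard, htcard, ← hLeq]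
    omega
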